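/- arXiv:1701.08613 — 5 statements merged into one kernel-verified Lean document; each statement's English description precedes it below -/
import Mathlib

section
/- For a univariate polynomial f ∈ ℂ[x] of degree d ≥ 1 and a point z ∈ ℂ with f(z) ≠ 0, the distance from z to the nearest root of f satisfies sep(f,z) ≤ d · min_{1 ≤ k ≤ d} |f(z)/f^{(k)}(z)|^{1/k}, interpreting the term as +∞ when f^{(k)}(z) = 0. -/
open Polynomial Metric

private lemma leibniz_X_sub_C (a : ℂ) (h : Polynomial ℂ) : ∀ (j : ℕ),
    Polynomial.derivative^[j + 1] ((X - C a) * h)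
      = (X - C a) * Polynomial.derivative^[j + 1] h
        + ((j : ℂ[X]) + 1) * Polynomial.derivative^[j] h := by
  intro j
  induction j with
  | zero => simp [derivative_mul]; ring
  | succ n ih =>
    rw [Function.iterate_succ_apply', ih]
    simp only [derivative_add, derivative_mul, derivative_sub, derivative_X, derivative_C,
      ← Function.iterate_succ_apply']
    push_cast
    simp only [derivative_add, derivative_natCast, derivative_one]
    ring

private lemma arith (za B1 B0 H E r : ℝ) (j m : ℕ) (hr : 0 ≤ r) (hza : r ≤ za)
    (hE : E ≤ za * B1 + ((j : ℝ) + 1) * B0)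
    (h1 : B1 * r ^ (j + 1) ≤ (m.descFactorial (j + 1) : ℝ) * H)
    (h0 : B0 * r ^ j ≤ (m.descFactorial j : ℝ) * H)
    (hH : 0 ≤ H) (hB0 : 0 ≤ B0) (hB1 : 0 ≤ B1) :
    E * r ^ (j + 1) ≤ ((m + 1).descFactorial (j + 1) : ℝ) * (za * H) := by
  have hza0 : 0 ≤ za := hr.trans hza
  have hdf : ((m + 1).descFactorial (j + 1) : ℝ)
      = (m.descFactorial (j + 1) : ℝ) + ((j : ℝ) + 1) * (m.descFactorial j : ℝ) := by
    rcases le_or_gt j m with hj | hj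
    · rw [Nat.succ_descFactorial_succ, Nat.descFactorial_succ]
      push_cast [Nat.cast_sub hj]
      ring
    · rw [Nat.succ_descFactorial_succ, Nat.descFactorial_of_lt hj,
        Nat.descFactorial_of_lt (by omega)]
      push_cast
      ring
  calc E * r ^ (j + 1)
      ≤ (za * B1 + ((j : ℝ) + 1) * B0) * r ^ (j + 1) :=
        mul_le_mul_of_nonneg_right hE (pow_nonneg hr _)
    _ = za * (B1 * r ^ (j + 1)) + ((j : ℝ) + 1) * (B0 * r ^ j) * r := by ring
    _ ≤ za * ((m.descFactorial (j + 1) : ℝ) * H)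
        + ((j : ℝ) + 1) * ((m.descFactorial j : ℝ) * H) * za := by
        gcongr
    _ = ((m.descFactorial (j + 1) : ℝ) + ((j : ℝ) + 1) * (m.descFactorial j : ℝ)) * (za * H) := by
        ring
    _ = ((m + 1).descFactorial (j + 1) : ℝ) * (za * H) := by rw [hdf]

set_option maxHeartbeats 1000000 in
private lemma key (z : ℂ) (r : ℝ) (hr : 0 ≤ r) : ∀ (s : Multiset ℂ),
    (∀ α ∈ s, r ≤ ‖z - α‖) → ∀ k : ℕ,
    ‖(Polynomial.derivative^[k] ((s.map (fun a => X - C a)).prod)).eval z‖ * r ^ k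
      ≤ (Multiset.card s).descFactorial k
        * ‖((s.map (fun a => X - C a)).prod).eval z‖ := by
  intro s
  induction s using Multiset.induction with
  | empty =>
    intro _ k
    match k with
    | 0 => simp
    | (j+1) =>
      simp only [Multiset.map_zero, Multiset.prod_zero, Multiset.card_zero,
        Nat.descFactorial_succ, Nat.zero_sub, Nat.zero_mul, Nat.cast_zero, zero_mul]
      rw [Function.iterate_succ_apply]
      simp
  | cons a s ih =>
    intro hs k
    have ha : r ≤ ‖z - a‖ := hs a (Multiset.mem_cons_self a s)
    have hs' : ∀ α ∈ s, r ≤ ‖z - α‖ := fun α hα => hs α (Multiset.mem_cons_of_mem hα)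
    have hprod : ((a ::ₘ s).map (fun a => X - C a)).prod
        = (X - C a) * (s.map (fun a => X - C a)).prod := by
      rw [Multiset.map_cons, Multiset.prod_cons]
    match k with
    | 0 => simp
    | (j+1) =>
      rw [hprod, leibniz_X_sub_C, Multiset.card_cons]
      have e1 : ‖((X - C a) * Polynomial.derivative^[j + 1]
              ((s.map (fun a => X - C a)).prod)
            + ((j : ℂ[X]) + 1) * Polynomial.derivative^[j]
              ((s.map (fun a => X - C a)).prod)).eval z‖
          ≤ ‖z - a‖
              * ‖(Polynomial.derivative^[j+1] ((s.map (fun a => X - C a)).prod)).eval z‖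
            + ((j : ℝ) + 1)
              * ‖(Polynomial.derivative^[j] ((s.map (fun a => X - C a)).prod)).eval z‖ := by
        simp only [eval_add, eval_mul, eval_sub, eval_X, eval_C, eval_natCast, eval_one]
        refine (norm_add_le _ _).trans ?_
        rw [norm_mul, norm_mul]
        have hje : ‖(j : ℂ) + 1‖ = (j : ℝ) + 1 := by
          rw [show ((j : ℂ) + 1) = ((j + 1 : ℕ) : ℂ) by push_cast; ring, Complex.norm_natCast]
          push_cast; ring
        rw [hje]
      have hgoal : (‖((X - C a) * ((s.map (fun a => X - C a)).prod)).eval z‖)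
          = ‖z - a‖ * ‖((s.map (fun a => X - C a)).prod).eval z‖ := by
        rw [eval_mul, norm_mul, eval_sub, eval_X, eval_C]
      rw [hgoal]
      exact arith _ _ _ _ _ _ j (Multiset.card s) hr ha e1 (ih hs' (j+1)) (ih hs' j)
        (norm_nonneg _) (norm_nonneg _) (norm_nonneg _)

set_option maxHeartbeats 1000000 in
theorem stmt1 (f : Polynomial ℂ) (d : ℕ) (hd : f.natDegree = d) (hd1 : 1 ≤ d)
    (z : ℂ) (hz : f.eval z ≠ 0) (k : ℕ) (hk1 : 1 ≤ k) (hkd : k ≤ d)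
    (hfk : (Polynomial.derivative^[k] f).eval z ≠ 0) :
    infDist z (f.rootSet ℂ)
      ≤ d * (‖f.eval z / (Polynomial.derivative^[k] f).eval z‖) ^ ((1 : ℝ) / k) := by
  have hf0 : f ≠ 0 := fun h => hz (by simp [h])
  set r : ℝ := infDist z (f.rootSet ℂ) with hr
  have hr0 : 0 ≤ r := infDist_nonneg
  -- factorization
  have hsplit : f.Splits := IsAlgClosed.splits f
  have hfact : f = C f.leadingCoeff * (f.roots.map fun a => X - C a).prod :=
    (C_leadingCoeff_mul_prod_multiset_X_sub_C (splits_iff_card_roots.mp hsplit)).symm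
  have hcard : Multiset.card f.roots = d := by
    rw [← hd]; exact (splits_iff_card_roots.mp hsplit)
  -- roots are far from z
  have hfar : ∀ α ∈ f.roots, r ≤ ‖z - α‖ := by
    intro α hα
    have hmem : α ∈ f.rootSet ℂ := by
      rw [mem_rootSet]
      exact ⟨hf0, by simpa using (isRoot_of_mem_roots hα)⟩
    have h2 := infDist_le_dist_of_mem (x := z) hmem
    rwa [Complex.dist_eq] at h2
  -- main estimate
  have hmain : ‖(Polynomial.derivative^[k] f).eval z‖ * r ^ k
      ≤ (d.descFactorial k : ℝ) * ‖f.eval z‖ := by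
    have hk := key z r hr0 f.roots hfar k
    rw [hcard] at hk
    have hlc : ‖f.leadingCoeff‖ ≠ 0 := by
      simpa using (leadingCoeff_ne_zero.mpr hf0)
    calc ‖(Polynomial.derivative^[k] f).eval z‖ * r ^ k
        = ‖f.leadingCoeff‖
          * (‖(Polynomial.derivative^[k] ((f.roots.map fun a => X - C a).prod)).eval z‖
            * r ^ k) := by
          conv_lhs => rw [hfact]
          rw [iterate_derivative_C_mul]
          simp only [eval_mul, eval_C, norm_mul]
          ring
      _ ≤ ‖f.leadingCoeff‖
          * ((d.descFactorial k : ℝ)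
            * ‖((f.roots.map fun a => X - C a).prod).eval z‖) := by
          gcongr
      _ = (d.descFactorial k : ℝ) * ‖f.eval z‖ := by
          conv_rhs => rw [hfact]
          simp only [eval_mul, eval_C, norm_mul]
          ring
  -- conclude
  set A : ℝ := ‖f.eval z / (Polynomial.derivative^[k] f).eval z‖ with hA
  have hApos : 0 < A := by
    rw [hA]
    exact norm_pos_iff.mpr (div_ne_zero hz hfk)
  have hfkpos : 0 < ‖(Polynomial.derivative^[k] f).eval z‖ :=
    norm_pos_iff.mpr hfk
  have hrk : r ^ k ≤ (d : ℝ) ^ k * A := by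
    have hdf : (d.descFactorial k : ℝ) ≤ (d : ℝ) ^ k := by
      exact_mod_cast Nat.cast_le.mpr (Nat.descFactorial_le_pow d k)
    have h1 : r ^ k ≤ (d.descFactorial k : ℝ)
        * ‖f.eval z‖ / ‖(Polynomial.derivative^[k] f).eval z‖ := by
      rw [le_div_iff₀ hfkpos]
      calc r ^ k * ‖(Polynomial.derivative^[k] f).eval z‖
          = ‖(Polynomial.derivative^[k] f).eval z‖ * r ^ k := by ring
        _ ≤ (d.descFactorial k : ℝ) * ‖f.eval z‖ := hmain
    have hAeq : A = ‖f.eval z‖ / ‖(Polynomial.derivative^[k] f).eval z‖ := by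
      rw [hA, norm_div]
    rw [hAeq, ← mul_div_assoc]
    refine h1.trans ?_
    gcongr
  have hk0 : (k : ℝ) ≠ 0 := by positivity
  have hrfl : r = (r ^ k) ^ ((1 : ℝ) / k) := by
    rw [← Real.rpow_natCast r k, ← Real.rpow_mul hr0]
    rw [mul_one_div, div_self hk0, Real.rpow_one]
  rw [hrfl]
  calc (r ^ k) ^ ((1 : ℝ) / k) ≤ ((d : ℝ) ^ k * A) ^ ((1 : ℝ) / k) := by
        apply Real.rpow_le_rpow (pow_nonneg hr0 _) hrk (by positivity)
    _ = (d : ℝ) * A ^ ((1 : ℝ) / k) := by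
        rw [Real.mul_rpow (by positivity) hApos.le, ← Real.rpow_natCast (d : ℝ) k,
          ← Real.rpow_mul (by positivity), mul_one_div, div_self hk0, Real.rpow_one]
end

section
/- Let f ∈ ℂ[x] of degree d ≥ 1 with roots α₁,…,α_d, z ∈ ℂ with f(z) ≠ 0, and 1 ≤ k ≤ d. Then |f^{(k)}(z)/f(z)| ≤ k! · C(d,k) / sep(f,z)^k, where sep(f,z) := min_i |z − α_i| and C(d,k) is the binomial coefficient. -/
open Polynomial Metric

lemma aux_pow_le_prod (ε : ℝ) (hε : 0 ≤ ε) (s : Multiset ℂ) (h : ∀ x ∈ s, ε ≤ ‖x‖) :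
    ε ^ Multiset.card s ≤ (s.map (fun x => ‖x‖)).prod := by
  induction s using Multiset.induction with
  | empty => simp
  | cons a s ih =>
    simp only [Multiset.card_cons, Multiset.map_cons, Multiset.prod_cons, pow_succ']
    exact mul_le_mul (h a (Multiset.mem_cons_self a s))
      (ih fun x hx => h x (Multiset.mem_cons_of_mem hx)) (pow_nonneg hε _) (norm_nonneg _)

lemma aux_norm_prod (s : Multiset ℂ) : ‖s.prod‖ = (s.map (fun x => ‖x‖)).prod := by
  induction s using Multiset.induction with
  | empty => simp
  | cons a s ih => simp [norm_mul, ih]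

theorem stmt4 (f : Polynomial ℂ) (d : ℕ) (hd : f.natDegree = d) (hd1 : 1 ≤ d)
    (z : ℂ) (hz : f.eval z ≠ 0) (k : ℕ) (hk1 : 1 ≤ k) (hkd : k ≤ d) :
    ‖(Polynomial.derivative^[k] f).eval z / f.eval z‖
      ≤ (Nat.factorial k : ℝ) * (d.choose k) / infDist z (f.rootSet ℂ) ^ k := by
  have hf0 : f ≠ 0 := fun h => hz (by simp [h])
  have hc : f.leadingCoeff ≠ 0 := leadingCoeff_ne_zero.mpr hf0
  have hsplit : f.Splits := IsAlgClosed.splits f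
  have hcard : Multiset.card f.roots = d := by rw [← hd]; exact splits_iff_card_roots.mp hsplit
  have hfe : f = C f.leadingCoeff * (f.roots.map fun a => X - C a).prod :=
    (C_leadingCoeff_mul_prod_multiset_X_sub_C (splits_iff_card_roots.mp hsplit)).symm
  have hmem : ∀ a ∈ f.roots, infDist z (f.rootSet ℂ) ≤ ‖z - a‖ := by
    intro a ha
    have : a ∈ f.rootSet ℂ := by
      rw [mem_rootSet]
      exact ⟨hf0, by simpa using isRoot_of_mem_roots ha⟩
    simpa [Complex.dist_eq] using infDist_le_dist_of_mem this
  have hε0 : 0 < infDist z (f.rootSet ℂ) := by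
    have hfin : (f.rootSet ℂ).Finite := f.rootSet_finite ℂ
    have hne : (f.rootSet ℂ).Nonempty := by
      obtain ⟨a, ha⟩ := IsAlgClosed.exists_root f (by
        rw [degree_eq_natDegree hf0, hd]
        exact_mod_cast Nat.one_le_iff_ne_zero.mp hd1)
      exact ⟨a, by rw [mem_rootSet]; exact ⟨hf0, by simpa using ha⟩⟩
    have hznot : z ∉ f.rootSet ℂ := by
      rw [mem_rootSet]; rintro ⟨-, h⟩; exact hz (by simpa using h)
    exact (hfin.isClosed.notMem_iff_infDist_pos hne).mp hznot
  have key : (derivative^[k] f).eval z = (Nat.factorial k : ℂ) * (taylor z f).coeff k := by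
    rw [taylor_coeff, ← factorial_smul_hasseDeriv]
    simp [nsmul_eq_mul]
  have htay : taylor z f =
      C f.leadingCoeff * ((f.roots.map fun a => a - z).map fun a => X - C a).prod := by
    conv_lhs => rw [hfe]
    rw [← taylorAlgHom_apply, map_mul, map_multiset_prod]
    simp only [Multiset.map_map, Function.comp, taylorAlgHom_apply, map_sub, taylor_X, taylor_C]
    congr 2
    apply Multiset.map_congr rfl
    intro a _
    ring
  set ε := infDist z (f.rootSet ℂ) with hεdef
  set t : Multiset ℂ := f.roots.map (fun a => a - z) with ht
  have hcard2 : Multiset.card t = d := by rw [ht, Multiset.card_map, hcard]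
  have hcoeff : (taylor z f).coeff k =
      f.leadingCoeff * ((-1)^(d-k) * t.esymm (d - k)) := by
    rw [htay, coeff_C_mul, Multiset.prod_X_sub_C_coeff t (by rw [hcard2]; exact hkd), hcard2]
  have heval : f.eval z = f.leadingCoeff * (f.roots.map fun a => z - a).prod := by
    conv_lhs => rw [hfe]
    rw [eval_mul, eval_C, eval_multiset_prod, Multiset.map_map]
    simp [Function.comp]
  have habs_t : ∀ x ∈ t, ε ≤ ‖x‖ := by
    intro x hx
    rw [ht, Multiset.mem_map] at hx
    obtain ⟨a, ha, rfl⟩ := hx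
    rw [norm_sub_rev]
    exact hmem a ha
  set P : ℝ := (t.map (fun x => ‖x‖)).prod with hPdef
  have hP0 : 0 < P :=
    lt_of_lt_of_le (pow_pos hε0 (Multiset.card t)) (aux_pow_le_prod ε hε0.le t habs_t)
  have habs_eval : ‖f.eval z‖ = ‖f.leadingCoeff‖ * P := by
    rw [heval, norm_mul, hPdef, ht, Multiset.map_map]
    congr 1
    rw [aux_norm_prod, Multiset.map_map]
    apply congrArg
    apply Multiset.map_congr rfl
    intro a _
    exact norm_sub_rev z a
  -- bound on each term of esymm
  have hterm : ∀ S ∈ Multiset.powersetCard (d - k) t,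
      ‖S.prod‖ ≤ P / ε ^ k := by
    intro S hS
    rw [Multiset.mem_powersetCard] at hS
    obtain ⟨hSle, hScard⟩ := hS
    have hsplitS : S + (t - S) = t := add_tsub_cancel_of_le hSle
    have hucard : Multiset.card (t - S) = k := by
      have h := Multiset.card_sub hSle
      omega
    have hP : P = (S.map (fun x => ‖x‖)).prod * ((t - S).map (fun x => ‖x‖)).prod := by
      rw [hPdef, ← hsplitS, Multiset.map_add, Multiset.prod_add, hsplitS]
    have h1 : ‖S.prod‖ = (S.map (fun x => ‖x‖)).prod := by
      rw [aux_norm_prod]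
    have h2 : ε ^ k ≤ ((t - S).map (fun x => ‖x‖)).prod := by
      rw [← hucard]
      exact aux_pow_le_prod ε hε0.le _ (fun x hx => habs_t x (Multiset.mem_of_le (tsub_le_self) hx))
    rw [le_div_iff₀ (pow_pos hε0 k), h1, hP]
    exact mul_le_mul_of_nonneg_left h2 (Multiset.prod_nonneg (by
      intro x hx
      rw [Multiset.mem_map] at hx
      obtain ⟨a, -, rfl⟩ := hx
      exact norm_nonneg a))
  have hesymm : ‖t.esymm (d - k)‖ ≤ (d.choose k : ℝ) * (P / ε ^ k) := by
    unfold Multiset.esymm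
    calc ‖(Multiset.map Multiset.prod (Multiset.powersetCard (d - k) t)).sum‖
        ≤ ((Multiset.map Multiset.prod (Multiset.powersetCard (d - k) t)).map (fun x => ‖x‖)).sum := by
          simpa using norm_multiset_sum_le (Multiset.map Multiset.prod (Multiset.powersetCard (d - k) t))
      _ ≤ ((Multiset.powersetCard (d - k) t).map (fun _ => P / ε ^ k)).sum := by
          rw [Multiset.map_map]
          apply Multiset.sum_map_le_sum_map
          intro S hS
          exact hterm S hS
      _ = (d.choose k : ℝ) * (P / ε ^ k) := by
          rw [Multiset.map_const', Multiset.sum_replicate, Multiset.card_powersetCard, hcard2,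
            Nat.choose_symm hkd, nsmul_eq_mul]
  -- put it together
  have hnum : ‖eval z ((⇑derivative)^[k] f)‖ =
      (Nat.factorial k : ℝ) * (‖f.leadingCoeff‖ * ‖t.esymm (d - k)‖) := by
    rw [key, hcoeff]
    simp [norm_mul, norm_pow, Complex.norm_natCast]
  rw [norm_div, hnum, habs_eval]
  rw [div_le_div_iff₀ (mul_pos (norm_pos_iff.mpr hc) hP0) (pow_pos hε0 k)]
  calc (Nat.factorial k : ℝ) * (‖f.leadingCoeff‖ * ‖t.esymm (d - k)‖) * ε ^ k
      ≤ (Nat.factorial k : ℝ) * (‖f.leadingCoeff‖ * ((d.choose k : ℝ) * (P / ε ^ k))) * ε ^ k := by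
        have hcabs : 0 < ‖f.leadingCoeff‖ := norm_pos_iff.mpr hc
        gcongr
      _ = (Nat.factorial k : ℝ) * (d.choose k) * (‖f.leadingCoeff‖ * P) := by
        have hεne : ε ≠ 0 := ne_of_gt hε0
        field_simp
end

section
/- Let f ∈ ℂ[x,y] with f(0,0) = a_{0,0} ≠ 0 and total degree D ≥ 1. Define γ := max over 1 ≤ k ≤ D and 0 ≤ i ≤ k of ((k!/C(k,i)) · |a_{i,k−i}/a_{0,0}|)^{1/k}. Then every point x = (x,y) ∈ ℂ² with γ · (|x| + |y|) < ln 2 satisfies f(x,y) ≠ 0. -/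
theorem stmt12 (D : ℕ) (hD : 1 ≤ D) (a : ℕ → ℕ → ℂ) (ha : a 0 0 ≠ 0)
    (γ : ℝ)
    (hγ : γ = sSup {r : ℝ | ∃ k, 1 ≤ k ∧ k ≤ D ∧ ∃ i ≤ k,
      r = ((Nat.factorial k : ℝ) / (k.choose i) * ‖a i (k - i) / a 0 0‖)
            ^ ((1 : ℝ) / k)})
    (x y : ℂ) (hxy : γ * (‖x‖ + ‖y‖) < Real.log 2) :
    (∑ k ∈ Finset.range (D + 1), ∑ i ∈ Finset.range (k + 1),
      a i (k - i) * x ^ i * y ^ (k - i)) ≠ 0 := by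
  set A : ℝ := ‖a 0 0‖ with hA
  have hA0 : 0 < A := by simpa [hA] using (norm_pos_iff.mpr ha)
  set S := {r : ℝ | ∃ k, 1 ≤ k ∧ k ≤ D ∧ ∃ i ≤ k,
      r = ((Nat.factorial k : ℝ) / (k.choose i) * ‖a i (k - i) / a 0 0‖)
            ^ ((1 : ℝ) / k)} with hS
  have hfin : S.Finite := by
    apply Set.Finite.subset (Set.Finite.image
      (f := fun p : ℕ × ℕ => ((Nat.factorial p.1 : ℝ) / (p.1.choose p.2)
        * ‖a p.2 (p.1 - p.2) / a 0 0‖) ^ ((1 : ℝ) / p.1))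
      (Set.Finite.prod (Set.finite_Iic D) (Set.finite_Iic D)))
    rintro r ⟨k, hk1, hkD, i, hik, rfl⟩
    exact ⟨⟨k, i⟩, ⟨hkD, le_trans hik hkD⟩, rfl⟩
  have hbdd : BddAbove S := hfin.bddAbove
  have hmem : ∀ k i, 1 ≤ k → k ≤ D → i ≤ k →
      ((Nat.factorial k : ℝ) / (k.choose i) * ‖a i (k - i) / a 0 0‖)
            ^ ((1 : ℝ) / k) ∈ S := by
    intro k i h1 h2 h3; exact ⟨k, h1, h2, i, h3, rfl⟩
  have hle : ∀ k i, 1 ≤ k → k ≤ D → i ≤ k →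
      ((Nat.factorial k : ℝ) / (k.choose i) * ‖a i (k - i) / a 0 0‖)
            ^ ((1 : ℝ) / k) ≤ γ := by
    intro k i h1 h2 h3
    rw [hγ]
    exact le_csSup hbdd (hmem k i h1 h2 h3)
  have hγ0 : 0 ≤ γ := by
    refine le_trans ?_ (hle 1 0 le_rfl hD (Nat.zero_le _))
    positivity
  have hbound : ∀ k i, 1 ≤ k → k ≤ D → i ≤ k →
      ‖a i (k - i)‖ ≤ A * (γ ^ k * (k.choose i) / (Nat.factorial k)) := by
    intro k i h1 h2 h3
    have hC : (0 : ℝ) < (k.choose i : ℝ) := by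
      exact_mod_cast Nat.choose_pos h3
    have hF : (0 : ℝ) < (Nat.factorial k : ℝ) := by exact_mod_cast Nat.factorial_pos k
    set b : ℝ := (Nat.factorial k : ℝ) / (k.choose i) * ‖a i (k - i) / a 0 0‖
      with hb
    have hb0 : 0 ≤ b := by positivity
    have hbk : b ≤ γ ^ k := by
      have := pow_le_pow_left₀ (Real.rpow_nonneg hb0 _) (hle k i h1 h2 h3) k
      rwa [one_div, Real.rpow_inv_natCast_pow hb0 (by omega)] at this
    have habs : ‖a i (k - i) / a 0 0‖ = ‖a i (k - i)‖ / A := by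
      simp [hA, norm_div]
    rw [hb, habs] at hbk
    rw [div_mul_div_comm] at hbk
    rw [div_le_iff₀ (by positivity)] at hbk
    calc ‖a i (k - i)‖
        = ((Nat.factorial k : ℝ) * ‖a i (k - i)‖) / (Nat.factorial k) := by
          field_simp
      _ ≤ γ ^ k * ((k.choose i : ℝ) * A) / (Nat.factorial k) := by
          apply div_le_div_of_nonneg_right hbk hF.le |>.trans_eq rfl
      _ = A * (γ ^ k * (k.choose i) / (Nat.factorial k)) := by ring
  set t : ℝ := γ * (‖x‖ + ‖y‖) with htdef
  have ht0 : 0 ≤ t := by positivity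
  -- bound the tail
  have hinner : ∀ k, k < D →
      ‖∑ i ∈ Finset.range (k + 1 + 1),
        a i (k + 1 - i) * x ^ i * y ^ (k + 1 - i)‖
      ≤ A * (t ^ (k + 1) / (Nat.factorial (k + 1))) := by
    intro k hk
    calc ‖∑ i ∈ Finset.range (k + 1 + 1),
          a i (k + 1 - i) * x ^ i * y ^ (k + 1 - i)‖
        ≤ ∑ i ∈ Finset.range (k + 1 + 1),
            ‖a i (k + 1 - i) * x ^ i * y ^ (k + 1 - i)‖ := by
          exact norm_sum_le _ _
      _ ≤ ∑ i ∈ Finset.range (k + 1 + 1),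
            A * (γ ^ (k + 1) * ((k + 1).choose i) / (Nat.factorial (k + 1)))
              * (‖x‖ ^ i * ‖y‖ ^ (k + 1 - i)) := by
          apply Finset.sum_le_sum
          intro i hi
          have hik : i ≤ k + 1 := Nat.lt_succ_iff.mp (Finset.mem_range.mp hi)
          have := hbound (k + 1) i (Nat.succ_le_succ (Nat.zero_le _)) (by omega) hik
          calc ‖a i (k + 1 - i) * x ^ i * y ^ (k + 1 - i)‖
              = ‖a i (k + 1 - i)‖ * (‖x‖ ^ i * ‖y‖ ^ (k + 1 - i)) := by
                rw [norm_mul, norm_mul, norm_pow, norm_pow]; ring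
            _ ≤ _ := by
                apply mul_le_mul_of_nonneg_right this (by positivity)
      _ = A * (γ ^ (k + 1) / (Nat.factorial (k + 1))) *
            ∑ i ∈ Finset.range (k + 1 + 1),
              ‖x‖ ^ i * ‖y‖ ^ (k + 1 - i) * ((k + 1).choose i) := by
          rw [Finset.mul_sum]; apply Finset.sum_congr rfl; intro i _; ring
      _ = A * (γ ^ (k + 1) / (Nat.factorial (k + 1))) * (‖x‖ + ‖y‖) ^ (k + 1) := by
          rw [← add_pow]
      _ = A * (t ^ (k + 1) / (Nat.factorial (k + 1))) := by
          rw [htdef, mul_pow]; ring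
  -- peel off the constant term
  rw [Finset.sum_range_succ']
  have h0 : (∑ i ∈ Finset.range (0 + 1), a i (0 - i) * x ^ i * y ^ (0 - i)) = a 0 0 := by
    simp
  rw [h0]
  intro hcon
  have hT : ‖∑ k ∈ Finset.range D, ∑ i ∈ Finset.range (k + 1 + 1),
      a i (k + 1 - i) * x ^ i * y ^ (k + 1 - i)‖ = A := by
    have : (∑ k ∈ Finset.range D, ∑ i ∈ Finset.range (k + 1 + 1),
        a i (k + 1 - i) * x ^ i * y ^ (k + 1 - i)) = - a 0 0 := by
      linear_combination hcon
    rw [this]; simp [hA]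
  have hTlt : ‖∑ k ∈ Finset.range D, ∑ i ∈ Finset.range (k + 1 + 1),
      a i (k + 1 - i) * x ^ i * y ^ (k + 1 - i)‖ < A := by
    calc ‖∑ k ∈ Finset.range D, ∑ i ∈ Finset.range (k + 1 + 1),
          a i (k + 1 - i) * x ^ i * y ^ (k + 1 - i)‖
        ≤ ∑ k ∈ Finset.range D, ‖∑ i ∈ Finset.range (k + 1 + 1),
            a i (k + 1 - i) * x ^ i * y ^ (k + 1 - i)‖ := norm_sum_le _ _
      _ ≤ ∑ k ∈ Finset.range D, A * (t ^ (k + 1) / (Nat.factorial (k + 1))) := by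
          apply Finset.sum_le_sum
          intro k hk
          exact hinner k (Finset.mem_range.mp hk)
      _ = A * ∑ k ∈ Finset.range D, t ^ (k + 1) / (Nat.factorial (k + 1)) := by
          rw [Finset.mul_sum]
      _ < A := by
          have hsum : ∑ k ∈ Finset.range D, t ^ (k + 1) / (Nat.factorial (k + 1)) < 1 := by
            have h1 : ∑ k ∈ Finset.range (D + 1), t ^ k / (Nat.factorial k) ≤ Real.exp t :=
              Real.sum_le_exp_of_nonneg ht0 _
            have h2 : Real.exp t < 2 := by
              calc Real.exp t < Real.exp (Real.log 2) := Real.exp_lt_exp.mpr hxy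
                _ = 2 := Real.exp_log (by norm_num)
            have h3 : ∑ k ∈ Finset.range (D + 1), t ^ k / (Nat.factorial k)
                = 1 + ∑ k ∈ Finset.range D, t ^ (k + 1) / (Nat.factorial (k + 1)) := by
              rw [Finset.sum_range_succ']; simp [add_comm]
            linarith
          calc A * ∑ k ∈ Finset.range D, t ^ (k + 1) / (Nat.factorial (k + 1))
              < A * 1 := by exact (mul_lt_mul_iff_right₀ hA0).mpr hsum
            _ = A := mul_one A
  rw [hT] at hTlt
  exact lt_irrefl _ hTlt
end

section
/- Let f ∈ ℂ[x,y] of total degree D ≥ 1 and p ∈ ℂ² with f(p) ≠ 0. Define γ_f(p) := max over 1 ≤ k ≤ D and 0 ≤ i ≤ k of |f_{i,k−i}(p)/f(p)|^{1/k}, where f_{i,j} are mixed partial derivatives. Then sep(p, V(f)) ≥ (ln 2)/(√2 · γ_f(p)) ≥ 1/(3 γ_f(p)), assuming γ_f(p) > 0. -/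
open MvPolynomial Metric


lemma coeff_binom (a : ℕ) (u v : ℂ) (i : ℕ) :
    ((Polynomial.C u + Polynomial.C v * Polynomial.X) ^ a).coeff i
      = a.choose i * u ^ (a - i) * v ^ i := by
  rcases eq_or_ne v 0 with rfl | hv
  · rw [map_zero, zero_mul, add_zero, ← Polynomial.C_pow, Polynomial.coeff_C]
    rcases Nat.eq_zero_or_pos i with rfl | hi
    · simp
    · simp [hi.ne', zero_pow]
  · have h1 : Polynomial.C u + Polynomial.C v * Polynomial.X
        = Polynomial.C v * (Polynomial.X + Polynomial.C (u / v)) := by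
      rw [mul_add, ← Polynomial.C_mul, mul_div_cancel₀ _ hv]; ring
    rw [h1, mul_pow, ← Polynomial.C_pow, Polynomial.coeff_C_mul,
      Polynomial.coeff_X_add_C_pow]
    rcases le_or_gt i a with hia | hia
    · have hva : v ^ a = v ^ (a - i) * v ^ i := by rw [← pow_add]; congr 1; omega
      rw [div_pow, hva]
      field_simp
    · simp [Nat.choose_eq_zero_of_lt hia]

lemma pderiv_iterate_monomial (t : Fin 2) (n : ℕ) (m : Fin 2 →₀ ℕ) (c : ℂ) :
    (pderiv t)^[n] (monomial m c)
      = monomial (m - Finsupp.single t n) (c * ((m t).descFactorial n : ℕ)) := by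
  induction n with
  | zero => simp
  | succ n ih =>
      rw [Function.iterate_succ_apply', ih, pderiv_monomial]
      rw [tsub_tsub, ← Finsupp.single_add]
      congr 1
      rw [Finsupp.tsub_apply, Finsupp.single_eq_same, Nat.descFactorial_succ]
      push_cast
      ring

lemma pderiv_iterate_add (t : Fin 2) (n : ℕ) (a b : MvPolynomial (Fin 2) ℂ) :
    (pderiv t)^[n] (a + b) = (pderiv t)^[n] a + (pderiv t)^[n] b := by
  induction n generalizing a b with
  | zero => rfl
  | succ n ih => rw [Function.iterate_succ_apply, map_add, ih, Function.iterate_succ_apply, Function.iterate_succ_apply]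

lemma coeff_line (f : MvPolynomial (Fin 2) ℂ) (p h : Fin 2 → ℂ) (k : ℕ) :
    (MvPolynomial.aeval (fun j => Polynomial.C (p j) + Polynomial.C (h j) * Polynomial.X) f).coeff k
      = ∑ i ∈ Finset.range (k+1),
          MvPolynomial.eval p ((pderiv (0:Fin 2))^[i] ((pderiv (1:Fin 2))^[k-i] f))
            * h 0 ^ i * h 1 ^ (k-i) / ((i).factorial * (k-i).factorial) := by
  induction f using MvPolynomial.induction_on' with
  | add q r hq hr =>
      rw [map_add, Polynomial.coeff_add, hq, hr, ← Finset.sum_add_distrib]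
      refine Finset.sum_congr rfl fun i _ => ?_
      rw [pderiv_iterate_add, pderiv_iterate_add, map_add]
      ring
  | monomial m c =>
      rw [aeval_monomial]
      rw [Finsupp.prod_fintype _ _ (fun j => pow_zero _), Fin.prod_univ_two]
      have hL : ∀ i : ℕ, i ≤ k →
          MvPolynomial.eval p ((pderiv (0:Fin 2))^[i] ((pderiv (1:Fin 2))^[k-i] (monomial m c)))
            = c * ((m 1).descFactorial (k-i) : ℕ) * ((m 0).descFactorial i : ℕ)
              * p 0 ^ (m 0 - i) * p 1 ^ (m 1 - (k-i)) := by
        intro i hi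
        rw [pderiv_iterate_monomial, pderiv_iterate_monomial]
        have h0 : (m - Finsupp.single 1 (k-i) : Fin 2 →₀ ℕ) 0 = m 0 := by
          rw [Finsupp.tsub_apply, Finsupp.single_eq_of_ne (by decide), tsub_zero]
        rw [h0, eval_monomial]
        rw [Finsupp.prod_fintype _ _ (fun j => pow_zero _), Fin.prod_univ_two]
        have e0 : (m - Finsupp.single 1 (k-i) - Finsupp.single 0 i : Fin 2 →₀ ℕ) 0 = m 0 - i := by
          rw [Finsupp.tsub_apply, Finsupp.tsub_apply, Finsupp.single_eq_same,
            Finsupp.single_eq_of_ne (by decide), tsub_zero]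
        have e1 : (m - Finsupp.single 1 (k-i) - Finsupp.single 0 i : Fin 2 →₀ ℕ) 1 = m 1 - (k-i) := by
          rw [Finsupp.tsub_apply, Finsupp.tsub_apply, Finsupp.single_eq_same,
            Finsupp.single_eq_of_ne (by decide), tsub_zero]
        rw [e0, e1]
        ring
      rw [Polynomial.algebraMap_eq, Polynomial.coeff_C_mul, Polynomial.coeff_mul,
        Finset.Nat.sum_antidiagonal_eq_sum_range_succ_mk, Finset.mul_sum]
      refine Finset.sum_congr rfl fun i hi => ?_
      have hik : i ≤ k := by simpa using Nat.lt_succ_iff.mp (Finset.mem_range.mp hi)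
      rw [hL i hik, coeff_binom, coeff_binom]
      have hdf0 : ((m 0).descFactorial i : ℂ) = (i.factorial : ℂ) * ((m 0).choose i : ℂ) := by
        rw [← Nat.cast_mul, Nat.descFactorial_eq_factorial_mul_choose]
      have hdf1 : ((m 1).descFactorial (k-i) : ℂ)
          = ((k-i).factorial : ℂ) * ((m 1).choose (k-i) : ℂ) := by
        rw [← Nat.cast_mul, Nat.descFactorial_eq_factorial_mul_choose]
      rw [hdf0, hdf1]
      have hfi : (i.factorial : ℂ) ≠ 0 := Nat.cast_ne_zero.mpr i.factorial_ne_zero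
      have hfk : ((k-i).factorial : ℂ) ≠ 0 := Nat.cast_ne_zero.mpr (k-i).factorial_ne_zero
      field_simp

lemma pderiv_iterate_sum {α : Type*} (t : Fin 2) (n : ℕ) (s : Finset α)
    (g : α → MvPolynomial (Fin 2) ℂ) :
    (pderiv t)^[n] (∑ a ∈ s, g a) = ∑ a ∈ s, (pderiv t)^[n] (g a) := by
  induction n generalizing g with
  | zero => rfl
  | succ n ih =>
      rw [Function.iterate_succ_apply, map_sum, ih]
      simp [Function.iterate_succ_apply]

lemma eval_pderiv_iterate_zero (f : MvPolynomial (Fin 2) ℂ) (p : Fin 2 → ℂ) (i j : ℕ)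
    (hij : f.totalDegree < i + j) :
    MvPolynomial.eval p ((pderiv (0:Fin 2))^[i] ((pderiv (1:Fin 2))^[j] f)) = 0 := by
  conv_lhs => rw [← f.support_sum_monomial_coeff]
  rw [pderiv_iterate_sum, pderiv_iterate_sum, map_sum]
  refine Finset.sum_eq_zero fun v hv => ?_
  have hsum : v 0 + v 1 ≤ f.totalDegree := by
    have := MvPolynomial.le_totalDegree hv
    rwa [Finsupp.sum_fintype _ _ (fun _ => rfl), Fin.sum_univ_two] at this
  rw [pderiv_iterate_monomial, pderiv_iterate_monomial]
  have h0 : (v - Finsupp.single 1 j : Fin 2 →₀ ℕ) 0 = v 0 := by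
    rw [Finsupp.tsub_apply, Finsupp.single_eq_of_ne (by decide), tsub_zero]
  rw [h0]
  have : (v 1).descFactorial j = 0 ∨ (v 0).descFactorial i = 0 := by
    rcases Nat.lt_or_ge (v 1) j with h | h
    · exact Or.inl (Nat.descFactorial_eq_zero_iff_lt.mpr h)
    · exact Or.inr (Nat.descFactorial_eq_zero_iff_lt.mpr (by omega))
  rcases this with h | h <;> simp [h]

lemma exists_zero (f : MvPolynomial (Fin 2) ℂ) (hdeg : 1 ≤ f.totalDegree) :
    ∃ x : Fin 2 → ℂ, MvPolynomial.eval x f = 0 := by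
  by_contra hcon
  push_neg at hcon
  -- zeroLocus of span {f} is empty
  have hzl : MvPolynomial.zeroLocus ℂ (Ideal.span {f}) = (∅ : Set (Fin 2 → ℂ)) := by
    rw [MvPolynomial.zeroLocus_span]
    ext x
    simp only [Set.mem_setOf_eq, Set.mem_empty_iff_false, iff_false, not_forall]
    exact ⟨f, Set.mem_singleton f, hcon x⟩
  have hrad : (Ideal.span {f}).radical = ⊤ := by
    rw [← MvPolynomial.vanishingIdeal_zeroLocus_eq_radical (K := ℂ), hzl,
      MvPolynomial.vanishingIdeal_empty]
  have hone : (1 : MvPolynomial (Fin 2) ℂ) ∈ (Ideal.span {f}).radical := by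
    rw [hrad]; trivial
  obtain ⟨n, hn⟩ := hone
  rw [one_pow, Ideal.mem_span_singleton] at hn
  obtain ⟨g, hg⟩ := hn
  -- θ : substitute x ↦ X, y ↦ X^(D+1)
  set D := f.totalDegree with hDdef
  set θ : MvPolynomial (Fin 2) ℂ →ₐ[ℂ] Polynomial ℂ :=
    MvPolynomial.aeval ![Polynomial.X, Polynomial.X ^ (D+1)]
    with hθ
  have hunit : IsUnit (θ f) := IsUnit.of_mul_eq_one (θ g) (by rw [← map_mul, ← hg, map_one])
  have hnd : (θ f).natDegree = 0 := Polynomial.natDegree_eq_zero_of_isUnit hunit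
  -- pick monomial of maximal degree
  have hfne : f ≠ 0 := by
    intro h0; rw [hDdef, h0] at hdeg; simp at hdeg
  obtain ⟨m, hm, hmD⟩ := Finset.exists_mem_eq_sup f.support
    (MvPolynomial.support_nonempty.mpr hfne) (fun s : Fin 2 →₀ ℕ => s.sum fun _ e => e)
  have hmsum : m 0 + m 1 = D := by
    rw [hDdef]
    rw [MvPolynomial.totalDegree, hmD, Finsupp.sum_fintype _ _ (fun _ => rfl), Fin.sum_univ_two]
  -- coefficient of θ f at degree m0 + (D+1) m1
  have hθmon : ∀ (v : Fin 2 →₀ ℕ) (c : ℂ),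
      θ (monomial v c) = Polynomial.C c * Polynomial.X ^ (v 0 + (D+1) * v 1) := by
    intro v c
    rw [hθ, aeval_monomial, Finsupp.prod_fintype _ _ (fun j => pow_zero _), Fin.prod_univ_two]
    simp only [Matrix.cons_val_zero, Matrix.cons_val_one, Matrix.head_cons]
    rw [Polynomial.algebraMap_eq, ← pow_mul, ← pow_add]
  have hcoeff : (θ f).coeff (m 0 + (D+1) * m 1) = MvPolynomial.coeff m f := by
    conv_lhs => rw [← f.support_sum_monomial_coeff, map_sum]
    rw [Polynomial.finset_sum_coeff]
    rw [Finset.sum_eq_single_of_mem m hm]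
    · rw [hθmon, Polynomial.coeff_C_mul, Polynomial.coeff_X_pow, if_pos rfl, mul_one]
    · intro v hv hvm
      rw [hθmon, Polynomial.coeff_C_mul, Polynomial.coeff_X_pow]
      have hneq : ¬ (m 0 + (D+1) * m 1 = v 0 + (D+1) * v 1) := by
        intro he
        have hv0 : v 0 ≤ D := by
          have := MvPolynomial.le_totalDegree hv
          rw [Finsupp.sum_fintype _ _ (fun _ => rfl), Fin.sum_univ_two] at this
          omega
        have hm0 : m 0 ≤ D := by omega
        have h00 : m 0 = v 0 := by
          have e1 : (m 0 + (D+1) * m 1) % (D+1) = m 0 := by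
            rw [Nat.add_mul_mod_self_left, Nat.mod_eq_of_lt (by omega)]
          have e2 : (v 0 + (D+1) * v 1) % (D+1) = v 0 := by
            rw [Nat.add_mul_mod_self_left, Nat.mod_eq_of_lt (by omega)]
          rw [← e1, ← e2, he]
        have h11 : m 1 = v 1 := by
          have e1 : (m 0 + (D+1) * m 1) / (D+1) = m 1 := by
            rw [Nat.add_mul_div_left _ _ (by omega), Nat.div_eq_of_lt (by omega)]; omega
          have e2 : (v 0 + (D+1) * v 1) / (D+1) = v 1 := by
            rw [Nat.add_mul_div_left _ _ (by omega), Nat.div_eq_of_lt (by omega)]; omega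
          rw [← e1, ← e2, he]
        apply hvm
        ext j
        fin_cases j
        · exact h00.symm
        · exact h11.symm
      rw [if_neg hneq, mul_zero]
  have hpos : 1 ≤ m 0 + (D+1) * m 1 := by
    have : 1 ≤ m 0 + m 1 := by omega
    nlinarith [Nat.zero_le (m 1), Nat.zero_le (m 0)]
  have : (θ f).coeff (m 0 + (D+1) * m 1) = 0 := by
    apply Polynomial.coeff_eq_zero_of_natDegree_lt
    omega
  rw [hcoeff] at this
  exact (MvPolynomial.mem_support_iff.mp hm) this

theorem stmt14 (f : MvPolynomial (Fin 2) ℂ)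
    (D : ℕ) (hD : f.totalDegree = D) (hD1 : 1 ≤ D)
    (p : EuclideanSpace ℂ (Fin 2)) (hp : MvPolynomial.eval p f ≠ 0)
    (γ : ℝ)
    (hγ : γ = sSup {r : ℝ | ∃ k, 1 ≤ k ∧ k ≤ D ∧ ∃ i ≤ k,
      r = ‖(MvPolynomial.eval p
            ((MvPolynomial.pderiv (0 : Fin 2))^[i]
              ((MvPolynomial.pderiv (1 : Fin 2))^[k - i] f)) / MvPolynomial.eval p f)‖
          ^ ((1 : ℝ) / k)})
    (hγpos : 0 < γ) :
    Real.log 2 / (Real.sqrt 2 * γ)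
        ≤ infDist p {x : EuclideanSpace ℂ (Fin 2) | MvPolynomial.eval x f = 0} ∧
    1 / (3 * γ) ≤ Real.log 2 / (Real.sqrt 2 * γ) := by
  have hs2 : (0:ℝ) < Real.sqrt 2 := Real.sqrt_pos.mpr (by norm_num)
  have hs2sq : Real.sqrt 2 ^ 2 = 2 := Real.sq_sqrt (by norm_num)
  have hlog2 : (0.6931471803 : ℝ) < Real.log 2 := Real.log_two_gt_d9
  constructor
  · -- main inequality
    set V : Set (EuclideanSpace ℂ (Fin 2)) := {x | MvPolynomial.eval x f = 0} with hV
    have hVne : V.Nonempty := by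
      obtain ⟨x, hx⟩ := exists_zero f (by rw [hD]; exact hD1)
      exact ⟨WithLp.toLp 2 x, hx⟩
    refine le_of_not_gt fun hlt => ?_
    obtain ⟨z, hzV, hdz⟩ := (infDist_lt_iff hVne).mp hlt
    have hz : MvPolynomial.eval z f = 0 := hzV
    -- setup
    set A : ℝ := ‖(MvPolynomial.eval p f)‖ with hA
    have hApos : 0 < A := by
      rw [hA]; exact norm_pos_iff.mpr hp
    set hv : Fin 2 → ℂ := fun j => z j - p j with hvdef
    set s : ℝ := ‖(hv 0)‖ + ‖(hv 1)‖ with hsdef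
    have hs0 : 0 ≤ s := by positivity
    -- gamma bounds
    have hbdd : BddAbove {r : ℝ | ∃ k, 1 ≤ k ∧ k ≤ D ∧ ∃ i ≤ k,
        r = ‖(MvPolynomial.eval p
              ((MvPolynomial.pderiv (0 : Fin 2))^[i]
                ((MvPolynomial.pderiv (1 : Fin 2))^[k - i] f)) / MvPolynomial.eval p f)‖
            ^ ((1 : ℝ) / k)} := by
      have hfin : ((fun q : ℕ × ℕ =>
          ‖(MvPolynomial.eval p
                ((MvPolynomial.pderiv (0 : Fin 2))^[q.2]
                  ((MvPolynomial.pderiv (1 : Fin 2))^[q.1 - q.2] f)) / MvPolynomial.eval p f)‖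
              ^ ((1 : ℝ) / q.1)) '' (Set.Iic D ×ˢ Set.Iic D)).Finite :=
        ((Set.finite_Iic D).prod (Set.finite_Iic D)).image _
      refine hfin.bddAbove.mono ?_
      rintro r ⟨k, hk1, hkD, i, hik, rfl⟩
      exact ⟨(k, i), ⟨Set.mem_Iic.mpr hkD, Set.mem_Iic.mpr (le_trans hik hkD)⟩, rfl⟩
    have hderiv : ∀ k i : ℕ, 1 ≤ k → i ≤ k →
        ‖(MvPolynomial.eval p
          ((pderiv (0:Fin 2))^[i] ((pderiv (1:Fin 2))^[k-i] f)))‖ ≤ A * γ ^ k := by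
      intro k i hk1 hik
      rcases le_or_gt k D with hkD | hkD
      · have hmem : (‖(MvPolynomial.eval p
            ((pderiv (0:Fin 2))^[i] ((pderiv (1:Fin 2))^[k-i] f)) / MvPolynomial.eval p f)‖)
              ^ ((1:ℝ)/k) ≤ γ := by
          rw [hγ]
          exact le_csSup hbdd ⟨k, hk1, hkD, i, hik, rfl⟩
        set r : ℝ := ‖(MvPolynomial.eval p
            ((pderiv (0:Fin 2))^[i] ((pderiv (1:Fin 2))^[k-i] f)) / MvPolynomial.eval p f)‖
          with hrdef
        have hr0 : 0 ≤ r := norm_nonneg _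
        have hrk : r ≤ γ ^ k := by
          have h1 : (r ^ ((1:ℝ)/k)) ^ k ≤ γ ^ k :=
            pow_le_pow_left₀ (Real.rpow_nonneg hr0 _) hmem k
          rwa [one_div, Real.rpow_inv_natCast_pow hr0 (by omega)] at h1
        have habs : ‖(MvPolynomial.eval p
            ((pderiv (0:Fin 2))^[i] ((pderiv (1:Fin 2))^[k-i] f)))‖ = r * A := by
          rw [hrdef, norm_div, ← hA, div_mul_cancel₀ _ hApos.ne']
        rw [habs, mul_comm]
        exact mul_le_mul_of_nonneg_left hrk hApos.le
      · rw [eval_pderiv_iterate_zero f p i (k-i) (by omega)]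
        simp only [norm_zero]
        positivity
    -- the restricted polynomial
    set g : Polynomial ℂ := MvPolynomial.aeval
      (fun j => Polynomial.C (p j) + Polynomial.C (hv j) * Polynomial.X) f with hg
    have hg1 : g.eval 1 = 0 := by
      rw [hg, MvPolynomial.aeval_def, Polynomial.algebraMap_eq]
      have := MvPolynomial.eval₂_comp_left (Polynomial.evalRingHom (1:ℂ)) Polynomial.C
        (fun j => Polynomial.C (p j) + Polynomial.C (hv j) * Polynomial.X) f
      simp only [Polynomial.coe_evalRingHom] at this
      rw [this]
      have h2 : (Polynomial.evalRingHom (1:ℂ)).comp Polynomial.C = RingHom.id ℂ := by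
        ext r; simp
      rw [h2]
      have h3 : (Polynomial.eval 1 ∘ fun j => Polynomial.C (p j) + Polynomial.C (hv j) * Polynomial.X)
          = fun j => (z j : ℂ) := by
        funext j; simp [hvdef]
      rw [h3]
      exact hz
    -- coefficient 0
    have hc0 : g.coeff 0 = MvPolynomial.eval p f := by
      rw [hg, coeff_line]
      simp
    -- coefficient bound for k ≥ 1
    have hcoeff : ∀ k : ℕ, 1 ≤ k →
        ‖(g.coeff k)‖ ≤ A * (γ * s) ^ k / k.factorial := by
      intro k hk1
      rw [hg, coeff_line]
      set a : ℝ := ‖(hv 0)‖ with hadef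
      set b : ℝ := ‖(hv 1)‖ with hbdef
      have ha0 : 0 ≤ a := norm_nonneg _
      have hb0 : 0 ≤ b := norm_nonneg _
      have step1 : ‖(∑ i ∈ Finset.range (k+1),
          MvPolynomial.eval p ((pderiv (0:Fin 2))^[i] ((pderiv (1:Fin 2))^[k-i] f))
            * hv 0 ^ i * hv 1 ^ (k-i) / ((i).factorial * (k-i).factorial))‖
          ≤ ∑ i ∈ Finset.range (k+1), (A * γ ^ k) * (a ^ i * b ^ (k-i) /
              ((i).factorial * (k-i).factorial)) := by
        refine le_trans (norm_sum_le _ _) (Finset.sum_le_sum fun i hi => ?_)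
        have hik : i ≤ k := by
          have := Finset.mem_range.mp hi; omega
        rw [norm_div, norm_mul, norm_mul, norm_mul, norm_pow, norm_pow, ← hadef, ← hbdef,
          Complex.norm_natCast, Complex.norm_natCast]
        rw [div_le_iff₀ (by positivity)]
        have := hderiv k i hk1 hik
        calc ‖(MvPolynomial.eval p
              ((pderiv (0:Fin 2))^[i] ((pderiv (1:Fin 2))^[k-i] f)))‖ * a ^ i * b ^ (k-i)
            ≤ (A * γ ^ k) * a ^ i * b ^ (k-i) := by
              gcongr
          _ = A * γ ^ k * (a ^ i * b ^ (k-i) / ((i).factorial * (k-i).factorial))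
              * ((i).factorial * (k-i).factorial) := by
              field_simp
      have step2 : ∑ i ∈ Finset.range (k+1), (a ^ i * b ^ (k-i) /
          (((i).factorial : ℝ) * ((k-i).factorial : ℝ)))
            = (a + b) ^ k / k.factorial := by
        rw [add_pow, Finset.sum_div]
        refine Finset.sum_congr rfl fun i hi => ?_
        have hik : i ≤ k := by
          have := Finset.mem_range.mp hi; omega
        have hfact : (k.factorial : ℝ)
            = (k.choose i : ℝ) * (((i).factorial : ℝ) * ((k-i).factorial : ℝ)) := by
          exact_mod_cast (by rw [← Nat.choose_mul_factorial_mul_factorial hik]; ring :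
            k.factorial = k.choose i * ((i).factorial * (k-i).factorial))
        rw [hfact]
        have h1 : ((i).factorial : ℝ) ≠ 0 := Nat.cast_ne_zero.mpr i.factorial_ne_zero
        have h2 : (((k-i)).factorial : ℝ) ≠ 0 := Nat.cast_ne_zero.mpr (k-i).factorial_ne_zero
        have h3 : (k.choose i : ℝ) ≠ 0 :=
          Nat.cast_ne_zero.mpr (Nat.choose_pos hik).ne'
        field_simp
      calc ‖(∑ i ∈ Finset.range (k+1),
          MvPolynomial.eval p ((pderiv (0:Fin 2))^[i] ((pderiv (1:Fin 2))^[k-i] f))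
            * hv 0 ^ i * hv 1 ^ (k-i) / ((i).factorial * (k-i).factorial))‖
          ≤ ∑ i ∈ Finset.range (k+1), (A * γ ^ k) * (a ^ i * b ^ (k-i) /
              ((i).factorial * (k-i).factorial)) := step1
        _ = (A * γ ^ k) * ((a + b) ^ k / k.factorial) := by
            rw [← Finset.mul_sum, step2]
        _ = A * (γ * s) ^ k / k.factorial := by
            rw [hsdef, mul_pow]
            ring
    -- sum of coefficients vanishes
    set N : ℕ := g.natDegree with hN
    have hsum0 : ∑ i ∈ Finset.range (N+1), g.coeff i = 0 := by
      have h := Polynomial.eval_eq_sum_range (p := g) (1 : ℂ)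
      rw [hg1] at h
      simpa using h.symm
    have hA_eq : MvPolynomial.eval p f = - ∑ i ∈ Finset.range N, g.coeff (i+1) := by
      have h := Finset.sum_range_succ' (fun i => g.coeff i) N
      rw [hsum0, hc0] at h
      linear_combination -h
    -- exponential bound
    have hT : ∑ i ∈ Finset.range N, (γ*s)^(i+1)/((i+1).factorial : ℝ)
        ≤ Real.exp (γ*s) - 1 := by
      have h1 : ∑ k ∈ Finset.range (N+1), (γ*s)^k / (k.factorial : ℝ)
          ≤ Real.exp (γ*s) := Real.sum_le_exp_of_nonneg (by positivity) _
      have h2 := Finset.sum_range_succ' (fun k => (γ*s)^k/(k.factorial:ℝ)) N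
      simp only [pow_zero, Nat.factorial_zero, Nat.cast_one, div_one] at h2
      linarith
    have hchain : A ≤ A * (Real.exp (γ * s) - 1) := by
      calc A = ‖(∑ i ∈ Finset.range N, g.coeff (i+1))‖ := by
            rw [hA, hA_eq, norm_neg]
        _ ≤ ∑ i ∈ Finset.range N, ‖(g.coeff (i+1))‖ :=
            norm_sum_le _ _
        _ ≤ ∑ i ∈ Finset.range N, A * (γ*s)^(i+1)/((i+1).factorial : ℝ) :=
            Finset.sum_le_sum fun i _ => hcoeff (i+1) (by omega)
        _ = A * ∑ i ∈ Finset.range N, (γ*s)^(i+1)/((i+1).factorial : ℝ) := by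
            rw [Finset.mul_sum]
            exact Finset.sum_congr rfl fun i _ => by ring
        _ ≤ A * (Real.exp (γ * s) - 1) := mul_le_mul_of_nonneg_left hT hApos.le
    have hexp : Real.log 2 ≤ γ * s := by
      have h1 : 1 ≤ Real.exp (γ * s) - 1 := by nlinarith
      rw [Real.log_le_iff_le_exp (by norm_num)]
      linarith
    -- distance comparison
    have hdist : s ≤ Real.sqrt 2 * dist p z := by
      have hd : dist p z = Real.sqrt (‖(hv 0)‖^2 + ‖(hv 1)‖^2) := by
        rw [EuclideanSpace.dist_eq, Fin.sum_univ_two]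
        congr 2 <;> rw [Complex.dist_eq, hvdef] <;>
          simp only [] <;> rw [norm_sub_rev]
      set a : ℝ := ‖(hv 0)‖ with hadef
      set b : ℝ := ‖(hv 1)‖ with hbdef
      have ha0 : 0 ≤ a := norm_nonneg _
      have hb0 : 0 ≤ b := norm_nonneg _
      have h2ab : s^2 ≤ 2*(a^2+b^2) := by
        rw [hsdef]
        nlinarith [sq_nonneg (a-b)]
      calc s = Real.sqrt (s^2) := (Real.sqrt_sq hs0).symm
        _ ≤ Real.sqrt (2*(a^2+b^2)) := Real.sqrt_le_sqrt h2ab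
        _ = Real.sqrt 2 * Real.sqrt (a^2+b^2) := Real.sqrt_mul (by norm_num) _
        _ = Real.sqrt 2 * dist p z := by rw [hd]
    have hfinal : γ * s < Real.log 2 := by
      have h4 : γ * s ≤ γ * (Real.sqrt 2 * dist p z) :=
        mul_le_mul_of_nonneg_left hdist hγpos.le
      have h5 : γ * (Real.sqrt 2 * dist p z)
          < γ * (Real.sqrt 2 * (Real.log 2 / (Real.sqrt 2 * γ))) :=
        mul_lt_mul_of_pos_left (mul_lt_mul_of_pos_left hdz hs2) hγpos
      have h6 : γ * (Real.sqrt 2 * (Real.log 2 / (Real.sqrt 2 * γ))) = Real.log 2 := by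
        field_simp
      linarith
    linarith
  · -- second inequality
    have h3 : Real.sqrt 2 ≤ 3 * Real.log 2 := by
      nlinarith [hs2, hs2sq, hlog2]
    rw [div_le_div_iff₀ (by positivity) (by positivity)]
    nlinarith [mul_le_mul_of_nonneg_right h3 hγpos.le]
end

section
/- Let f ∈ ℂ[x,y] of total degree D ≥ 1 and p ∈ ℂ² with f(p) ≠ 0. Then for every k with 1 ≤ k ≤ D, |∂^k f/∂x^k (p)|·|f(p)|^{−1} ≤ (D / sep(p, V(f)))^k, where sep(p, V(f)) is the Euclidean distance from p to the zero set of f. (Here the restriction of f to the horizontal line through p is used; if that restriction is constant, the left side is 0 and the bound holds trivially.) -/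
namespace Stmt17A
open Polynomial MvPolynomial

noncomputable def lineRes (c : ℂ) : MvPolynomial (Fin 2) ℂ →ₐ[ℂ] Polynomial ℂ :=
  MvPolynomial.aeval ![Polynomial.X, Polynomial.C c]

lemma lineRes_pderiv (c : ℂ) (f : MvPolynomial (Fin 2) ℂ) :
    lineRes c (pderiv 0 f) = derivative (lineRes c f) := by
  induction f using MvPolynomial.induction_on with
  | C a => simp [lineRes]
  | add f g hf hg => simp [map_add, hf, hg]
  | mul_X f i hf =>
      simp only [pderiv_mul, map_add, map_mul, hf, derivative_mul]
      congr 2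
      fin_cases i <;> simp [lineRes, Pi.single_apply]

lemma lineRes_pderiv_iter (c : ℂ) (f : MvPolynomial (Fin 2) ℂ) (k : ℕ) :
    lineRes c ((pderiv (0 : Fin 2))^[k] f) = derivative^[k] (lineRes c f) := by
  induction k with
  | zero => rfl
  | succ k ih =>
      rw [Function.iterate_succ_apply', Function.iterate_succ_apply', lineRes_pderiv, ih]

lemma lineRes_eval (c z : ℂ) (f : MvPolynomial (Fin 2) ℂ) :
    Polynomial.eval z (lineRes c f) = MvPolynomial.eval ![z, c] f := by
  induction f using MvPolynomial.induction_on with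
  | C a => simp [lineRes]
  | add f g hf hg => simp [hf, hg]
  | mul_X f i hf => fin_cases i <;> simp [lineRes, hf] <;> left <;> exact hf

lemma lineRes_natDegree (c : ℂ) (f : MvPolynomial (Fin 2) ℂ) :
    (lineRes c f).natDegree ≤ f.totalDegree := by
  conv_lhs => rw [f.as_sum, map_sum]
  refine (Polynomial.natDegree_sum_le _ _).trans ?_
  rw [Finset.fold_max_le]
  refine ⟨Nat.zero_le _, fun m hm => ?_⟩
  rw [Function.comp_apply, lineRes, MvPolynomial.aeval_monomial, Finsupp.prod]
  refine (Polynomial.natDegree_mul_le).trans ?_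
  refine le_trans (add_le_add (Polynomial.natDegree_C _).le (Polynomial.natDegree_prod_le _ _)) ?_
  rw [zero_add]
  refine le_trans ?_ (MvPolynomial.le_totalDegree hm)
  rw [Finsupp.sum]
  refine Finset.sum_le_sum fun i _ => ?_
  refine (Polynomial.natDegree_pow_le).trans ?_
  fin_cases i <;> simp

end Stmt17A

namespace Stmt17B
open Polynomial Multiset Stmt17A

lemma pow_le_abs_prod (d : ℝ) (hd : 0 ≤ d) (u : Multiset ℂ)
    (h : ∀ r ∈ u, d ≤ ‖r‖) :
    d ^ Multiset.card u ≤ ‖u.prod‖ := by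
  induction u using Multiset.induction_on with
  | empty => simp
  | cons a u ih =>
      simp only [Multiset.card_cons, Multiset.prod_cons, pow_succ, norm_mul]
      rw [mul_comm (d ^ Multiset.card u) d]
      exact mul_le_mul (h a (Multiset.mem_cons_self a u))
        (ih fun r hr => h r (Multiset.mem_cons_of_mem hr))
        (pow_nonneg hd _) (norm_nonneg _)

lemma core_univariate (g : Polynomial ℂ) (z : ℂ) (hz : g.eval z ≠ 0) (d : ℝ) (hd : 0 < d)
    (hroot : ∀ r ∈ g.roots, d ≤ ‖z - r‖) (k : ℕ) :
    ‖(derivative^[k] g).eval z‖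
      ≤ (g.natDegree.descFactorial k : ℝ) / d ^ k * ‖g.eval z‖ := by
  have hg : g ≠ 0 := fun h => hz (by simp [h])
  by_cases hk : g.natDegree < k
  · rw [Polynomial.iterate_derivative_eq_zero hk]
    rw [eval_zero, norm_zero]
    positivity
  push_neg at hk
  set n := g.natDegree with hn
  have hsplit : Splits g := IsAlgClosed.splits g
  have hcard : Multiset.card g.roots = n := (Polynomial.splits_iff_card_roots).mp hsplit
  have hfac : g = C g.leadingCoeff * (g.roots.map fun a => X - C a).prod :=
    (Polynomial.C_leadingCoeff_mul_prod_multiset_X_sub_C hcard).symm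
  set s : Multiset ℂ := g.roots.map (fun a => z - a) with hs
  have hscard : Multiset.card s = n := by rw [hs, Multiset.card_map, hcard]
  have heval : g.eval z = g.leadingCoeff * s.prod := by
    conv_lhs => rw [hfac]
    rw [eval_mul, eval_C, Polynomial.eval_multiset_prod, Multiset.map_map, hs]
    exact congrArg _ (congrArg Multiset.prod (Multiset.map_congr rfl fun a _ => by simp))
  have htaylor : taylor z g = C g.leadingCoeff * (s.map fun r => X + C r).prod := by
    rw [taylor_apply]
    conv_lhs => rw [hfac]
    rw [mul_comp, C_comp, Polynomial.multiset_prod_comp, Multiset.map_map, hs, Multiset.map_map]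
    congr 2
    apply Multiset.map_congr rfl
    intro a _
    simp only [Function.comp_apply, sub_comp, X_comp, C_comp, C_sub]
    ring
  have hcoeff : (Polynomial.hasseDeriv k g).eval z = g.leadingCoeff * s.esymm (n - k) := by
    rw [← Polynomial.taylor_coeff, htaylor, coeff_C_mul,
      Multiset.prod_X_add_C_coeff s (hscard ▸ hk), hscard]
  have hterm : ∀ t ∈ s.powersetCard (n - k), ‖t.prod‖ * d ^ k ≤ ‖s.prod‖ := by
    intro t ht
    rw [Multiset.mem_powersetCard] at ht
    obtain ⟨u, hu⟩ := Multiset.le_iff_exists_add.mp ht.1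
    have hucard : Multiset.card u = k := by
      have h2 := hscard
      rw [hu, Multiset.card_add, ht.2] at h2
      omega
    rw [hu, Multiset.prod_add, norm_mul]
    refine mul_le_mul_of_nonneg_left ?_ (norm_nonneg _)
    rw [← hucard]
    refine pow_le_abs_prod d hd.le u fun r hr => ?_
    have hrs : r ∈ s := hu ▸ Multiset.mem_add.mpr (Or.inr hr)
    obtain ⟨a, ha, rfl⟩ := Multiset.mem_map.mp (hs ▸ hrs)
    exact hroot a ha
  have hesymm : ‖s.esymm (n - k)‖ ≤ (n.choose k : ℝ) * (‖s.prod‖ / d ^ k) := by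
    rw [Multiset.esymm]
    refine (norm_multiset_sum_le _).trans ?_
    rw [Multiset.map_map]
    calc ((s.powersetCard (n - k)).map (norm ∘ Multiset.prod)).sum
        ≤ Multiset.card ((s.powersetCard (n - k)).map (norm ∘ Multiset.prod))
            • (‖s.prod‖ / d ^ k) := by
          refine Multiset.sum_le_card_nsmul _ _ ?_
          intro x hx
          obtain ⟨t, ht, rfl⟩ := Multiset.mem_map.mp hx
          rw [Function.comp_apply, le_div_iff₀ (show (0:ℝ) < d ^ k by positivity)]
          exact hterm t ht
      _ = (n.choose k : ℝ) * (‖s.prod‖ / d ^ k) := by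
          rw [Multiset.card_map, Multiset.card_powersetCard, hscard, Nat.choose_symm hk,
            nsmul_eq_mul]
  have hder : (derivative^[k] g).eval z = (k.factorial : ℂ) * (Polynomial.hasseDeriv k g).eval z := by
    have h0 := congrFun (Polynomial.factorial_smul_hasseDeriv (R := ℂ) k).symm g
    rw [h0, LinearMap.smul_apply, Polynomial.eval_smul, nsmul_eq_mul]
  rw [hder, hcoeff, heval]
  rw [norm_mul, norm_mul, norm_mul]
  rw [Complex.norm_natCast]
  have hdesc : (g.natDegree.descFactorial k : ℝ) = (k.factorial : ℝ) * n.choose k := by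
    rw [← hn, Nat.descFactorial_eq_factorial_mul_choose]
    push_cast; ring
  rw [hdesc]
  have h1 : ‖g.leadingCoeff‖ * ‖s.esymm (n - k)‖
      ≤ ‖g.leadingCoeff‖ * ((n.choose k : ℝ) * (‖s.prod‖ / d ^ k)) :=
    mul_le_mul_of_nonneg_left hesymm (norm_nonneg _)
  calc (k.factorial : ℝ) * (‖g.leadingCoeff‖ * ‖s.esymm (n - k)‖)
      ≤ (k.factorial : ℝ) * (‖g.leadingCoeff‖ * ((n.choose k : ℝ) * (‖s.prod‖ / d ^ k))) :=
        mul_le_mul_of_nonneg_left h1 (by positivity)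
    _ = (k.factorial : ℝ) * (n.choose k : ℝ) / d ^ k * (‖g.leadingCoeff‖ * ‖s.prod‖) := by
        ring

end Stmt17B

open MvPolynomial Metric Stmt17A Stmt17B Polynomial in
theorem stmt17 (f : MvPolynomial (Fin 2) ℂ)
    (D : ℕ) (hD : f.totalDegree = D) (hD1 : 1 ≤ D)
    (p : EuclideanSpace ℂ (Fin 2)) (hp : MvPolynomial.eval p f ≠ 0)
    (k : ℕ) (hk1 : 1 ≤ k) (hkD : k ≤ D) :
    ‖MvPolynomial.eval p ((MvPolynomial.pderiv (0 : Fin 2))^[k] f)‖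
        * ‖MvPolynomial.eval p f‖⁻¹
      ≤ (D / infDist p {x : EuclideanSpace ℂ (Fin 2) | MvPolynomial.eval x f = 0}) ^ k := by
  set V : Set (EuclideanSpace ℂ (Fin 2)) :=
    {x : EuclideanSpace ℂ (Fin 2) | MvPolynomial.eval x f = 0} with hV
  set g : Polynomial ℂ := lineRes (p 1) f with hg
  have hpe : (![p 0, p 1] : Fin 2 → ℂ) = (p : Fin 2 → ℂ) := by
    funext i; fin_cases i <;> rfl
  have hgz : g.eval (p 0) = MvPolynomial.eval p f := by
    rw [hg, lineRes_eval, hpe]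
  have hL : MvPolynomial.eval p ((MvPolynomial.pderiv (0 : Fin 2))^[k] f)
      = (derivative^[k] g).eval (p 0) := by
    rw [hg, ← lineRes_pderiv_iter, lineRes_eval, hpe]
  have hgz0 : g.eval (p 0) ≠ 0 := by rw [hgz]; exact hp
  have hgne : g ≠ 0 := fun h => hgz0 (by simp [h])
  have hdeg : g.natDegree ≤ D := hD ▸ lineRes_natDegree (p 1) f
  by_cases hroots : g.roots = 0
  · -- no roots: g is a nonzero constant, so the k-th derivative vanishes
    have hnd : g.natDegree = 0 := by
      have hcard := (Polynomial.splits_iff_card_roots).mp (IsAlgClosed.splits g)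
      rw [hroots] at hcard
      simpa using hcard.symm
    have : derivative^[k] g = 0 :=
      Polynomial.iterate_derivative_eq_zero (by omega)
    rw [hL, this]
    simp only [Polynomial.eval_zero, norm_zero, zero_mul]
    exact pow_nonneg (div_nonneg (Nat.cast_nonneg D) infDist_nonneg) k
  · obtain ⟨r, hr⟩ := Multiset.exists_mem_of_ne_zero hroots
    have hroot_eval : ∀ a ∈ g.roots, MvPolynomial.eval (![a, p 1] : Fin 2 → ℂ) f = 0 := by
      intro a ha
      have : g.eval a = 0 := (Polynomial.mem_roots hgne).mp ha
      rw [hg, lineRes_eval] at this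
      exact this
    have hVmem : ∀ a ∈ g.roots,
        (WithLp.toLp 2 ![a, p 1] : EuclideanSpace ℂ (Fin 2)) ∈ V := by
      intro a ha
      exact hroot_eval a ha
    have hVne : V.Nonempty := ⟨_, hVmem r hr⟩
    have hVclosed : IsClosed V := by
      apply isClosed_eq ?_ continuous_const
      exact (MvPolynomial.continuous_eval (p := f)).comp (PiLp.continuous_ofLp 2 fun _ : Fin 2 => ℂ)
    have hpV : p ∉ V := hp
    have hd : 0 < infDist p V := (hVclosed.notMem_iff_infDist_pos hVne).mp hpV
    have hdist : ∀ a ∈ g.roots, infDist p V ≤ ‖p 0 - a‖ := by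
      intro a ha
      refine (infDist_le_dist_of_mem (hVmem a ha)).trans ?_
      have hde : dist p (WithLp.toLp 2 ![a, p 1] : EuclideanSpace ℂ (Fin 2))
          = Real.sqrt (dist (p 0) a ^ 2 + dist (p 1) (p 1) ^ 2) := by
        rw [EuclideanSpace.dist_eq, Fin.sum_univ_two]
        rfl
      rw [hde, dist_self, Complex.dist_eq]
      rw [show (0:ℝ) ^ 2 = 0 by norm_num, add_zero,
        Real.sqrt_sq (norm_nonneg _)]
    have hcore := core_univariate g (p 0) hgz0 (infDist p V) hd hdist k
    have habs : 0 < ‖g.eval (p 0)‖ := norm_pos_iff.mpr hgz0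
    rw [hL, ← hgz]
    calc ‖(derivative^[k] g).eval (p 0)‖ * (‖g.eval (p 0)‖)⁻¹
        ≤ ((g.natDegree.descFactorial k : ℝ) / (infDist p V) ^ k * ‖g.eval (p 0)‖)
            * (‖g.eval (p 0)‖)⁻¹ :=
          mul_le_mul_of_nonneg_right hcore (inv_nonneg.mpr (norm_nonneg _))
      _ = (g.natDegree.descFactorial k : ℝ) / (infDist p V) ^ k := by
          field_simp
      _ ≤ (D : ℝ) ^ k / (infDist p V) ^ k := by
          apply div_le_div_of_nonneg_right ?_ (by positivity)
          exact_mod_cast (Nat.descFactorial_le_pow _ _).trans (Nat.pow_le_pow_left hdeg k)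
      _ = ((D : ℝ) / infDist p V) ^ k := (div_pow _ _ _).symm
end
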